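/- Let 𝔧 be a strongly stable ideal in R, m a positive integer, and 𝔊 a [𝔧,m]-marked set with completion 𝔊̄. Then the set G = {x_0^{m_α} f_α^h : f_α ∈ 𝔊 ∪ 𝔊̄}, where m_α = max{0, m − deg f_α} and f^h denotes homogenization, is a (𝔧^h)_{≥m}-marked set in S, with head terms Ht(x_0^{m_α} f_α^h) = x_0^{m_α + deg(f_α) − |α|} x^α. -/

import Mathlib

open MvPolynomial

namespace Paper

/-- Monomials (exponent vectors) in `N` variables. -/
abbrev Mon (N : ℕ) := Fin N →₀ ℕ

variable {N : ℕ}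

/-- Total degree of a monomial. -/
def mdeg (u : Mon N) : ℕ := u.sum fun _ e => e

/-- `BorelStep a b` : `b` is obtained from `a` by one increasing elementary move,
i.e. `x^a · x_j = x^b · x_i` with `i < j`. -/
def BorelStep (a b : Mon N) : Prop :=
  ∃ i j : Fin N, i < j ∧ a + Finsupp.single j 1 = b + Finsupp.single i 1

/-- `BorelLt a b` : `a <_B b`, i.e. `b` is obtained from `a` by a nonempty
sequence of increasing elementary moves. -/
def BorelLt (a b : Mon N) : Prop := Relation.TransGen BorelStep a b

/-- A (combinatorially encoded) monomial ideal: a set of monomials closed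
under multiplication by monomials. -/
def MonIdeal (J : Set (Mon N)) : Prop := ∀ u ∈ J, ∀ d : Mon N, u + d ∈ J

/-- A strongly stable monomial ideal. -/
def StronglyStable (J : Set (Mon N)) : Prop :=
  MonIdeal J ∧ ∀ b ∈ J, ∀ a, BorelLt b a → a ∈ J

/-- The minimal monomial basis `B_J` of a monomial ideal. -/
def MinBasis (J : Set (Mon N)) : Set (Mon N) :=
  {u | u ∈ J ∧ ∀ v ∈ J, v ≤ u → v = u}

/-- `min(x^a) ≥ max(x^h)`. -/
def StarCond (a h : Mon N) : Prop :=
  ∀ i j : Fin N, a i ≠ 0 → h j ≠ 0 → j ≤ i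


variable (K : Type) [Field K]

/-- The monomial `x^u` as a polynomial. -/
noncomputable def mono {N : ℕ} (u : Mon N) : MvPolynomial (Fin N) K :=
  MvPolynomial.monomial u (1 : K)

/-- The (actual) monomial ideal of `S` spanned by a set of monomials. -/
noncomputable def idealOf {N : ℕ} (J : Set (Mon N)) : Ideal (MvPolynomial (Fin N) K) :=
  Ideal.span (mono K '' J)

/-- The irrelevant maximal ideal `(x_0, …, x_n)`. -/
noncomputable def irrel (N : ℕ) : Ideal (MvPolynomial (Fin N) K) :=
  Ideal.span (Set.range MvPolynomial.X)

/-- The saturation `I^sat = ⋃_j (I : (x_0,…,x_n)^j)`. -/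
noncomputable def satIdeal {N : ℕ} (I : Ideal (MvPolynomial (Fin N) K)) :
    Ideal (MvPolynomial (Fin N) K) :=
  ⨆ k : ℕ, Submodule.colon I ((irrel K N ^ k : Ideal (MvPolynomial (Fin N) K)) : Set (MvPolynomial (Fin N) K))

/-- The satiety of a homogeneous ideal: the smallest `m` such that
`I_t = (I^sat)_t` for all `t ≥ m`. -/
noncomputable def satiety {N : ℕ} (I : Ideal (MvPolynomial (Fin N) K)) : ℕ :=
  sInf {m | ∀ t, m ≤ t → ∀ p : MvPolynomial (Fin N) K,
    p.IsHomogeneous t → (p ∈ I ↔ p ∈ satIdeal K I)}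

/-- The saturation of a combinatorial monomial ideal. -/
def msat {N : ℕ} (J : Set (Mon N)) : Set (Mon N) :=
  {u | ∃ k : ℕ, ∀ d : Mon N, mdeg d = k → u + d ∈ J}

/-- The satiety of a combinatorial monomial ideal. -/
noncomputable def msatiety {N : ℕ} (J : Set (Mon N)) : ℕ :=
  sInf {m | ∀ u : Mon N, m ≤ mdeg u → (u ∈ J ↔ u ∈ msat J)}

/-- A non-homogeneous `𝔧`-marked set: marked polynomials `f_α` with pairwise
distinct head terms forming `B_𝔧` and tails supported outside `𝔧`. -/
def NHMarkedSet {N : ℕ} (𝔧 : Set (Mon N)) (f : Mon N → MvPolynomial (Fin N) K) : Prop :=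
  ∀ α ∈ MinBasis 𝔧,
    MvPolynomial.coeff α (f α) = 1 ∧
    ∀ u ∈ (f α).support, u ≠ α → u ∉ 𝔧

/-- One step of the `𝔊_∗`-reduction: the monomial `x^γ = x^α ∗_𝔧 x^η` of the
support of `g` is replaced by `x^η · T(f_α)`. -/
def RStep {N : ℕ} (𝔧 : Set (Mon N)) (f : Mon N → MvPolynomial (Fin N) K)
    (g g₁ : MvPolynomial (Fin N) K) : Prop :=
  ∃ γ α η : Mon N, γ ∈ g.support ∧ γ ∈ 𝔧 ∧ α ∈ MinBasis 𝔧 ∧ γ = α + η ∧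
    StarCond α η ∧
    g₁ = g - MvPolynomial.coeff γ g • (mono K η * f α)

/-- The `𝔊_∗`-reduction relation (reflexive-transitive closure of `RStep`). -/
def Reduces {N : ℕ} (𝔧 : Set (Mon N)) (f : Mon N → MvPolynomial (Fin N) K) :
    MvPolynomial (Fin N) K → MvPolynomial (Fin N) K → Prop :=
  Relation.ReflTransGen (RStep K 𝔧 f)

/-- `g` is reduced: `supp(g) ∩ 𝔧 = ∅`. -/
def IsReducedPoly {N : ℕ} (𝔧 : Set (Mon N)) (g : MvPolynomial (Fin N) K) : Prop :=
  ∀ u ∈ g.support, u ∉ 𝔧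

/-- A `[𝔧,m]`-marked set: a n.h. `𝔧`-marked set whose tails are supported in
`N(𝔧)_{≤ max{m,|α|}}`. -/
def JmMarkedSet {N : ℕ} (𝔧 : Set (Mon N)) (m : ℕ)
    (f : Mon N → MvPolynomial (Fin N) K) : Prop :=
  ∀ α ∈ MinBasis 𝔧,
    MvPolynomial.coeff α (f α) = 1 ∧
    ∀ u ∈ (f α).support, u ≠ α → (u ∉ 𝔧 ∧ mdeg u ≤ max m (mdeg α))

/-- The ideal `(𝔊)` generated by a marked set. -/
noncomputable def idealG {N : ℕ} (𝔧 : Set (Mon N))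
    (f : Mon N → MvPolynomial (Fin N) K) : Ideal (MvPolynomial (Fin N) K) :=
  Ideal.span (f '' MinBasis 𝔧)

/-- A `[𝔧,m]`-completion of `𝔊`: marked polynomials `f_β ∈ (𝔊)` with pairwise
distinct head terms the monomials of `𝔧_{≤m} \ B_𝔧` and tails in `N(𝔧)_{≤m}`. -/
def IsCompletion {N : ℕ} (𝔧 : Set (Mon N)) (m : ℕ)
    (f h : Mon N → MvPolynomial (Fin N) K) : Prop :=
  ∀ β : Mon N, β ∈ 𝔧 → mdeg β ≤ m → β ∉ MinBasis 𝔧 →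
    h β ∈ idealG K 𝔧 f ∧
    MvPolynomial.coeff β (h β) = 1 ∧
    ∀ u ∈ (h β).support, u ≠ β → (u ∉ 𝔧 ∧ mdeg u ≤ m)

/-- `g'` is a `[𝔧,m]`-reduced form of `g` modulo `(𝔊)`. -/
def IsReducedForm {N : ℕ} (𝔧 : Set (Mon N)) (m : ℕ)
    (f : Mon N → MvPolynomial (Fin N) K)
    (g g' : MvPolynomial (Fin N) K) : Prop :=
  (∀ u ∈ g'.support, u ∉ 𝔧 ∧ mdeg u ≤ max m g.totalDegree) ∧
  g - g' ∈ idealG K 𝔧 f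

/-- `R_{≤ t}`: the `K`-subspace of polynomials of degree at most `t`. -/
noncomputable def degLE (N : ℕ) (t : ℕ) : Submodule K (MvPolynomial (Fin N) K) where
  carrier := {g | ∀ u ∈ g.support, mdeg u ≤ t}
  zero_mem' := by simp
  add_mem' := by
    intro a b ha hb u hu
    rcases Finset.mem_union.mp (MvPolynomial.support_add hu) with h | h
    · exact ha u h
    · exact hb u h
  smul_mem' := by
    intro c a ha u hu
    exact ha u (MvPolynomial.support_smul hu)

/-- `⟨N(𝔧)_{≤t}⟩`: the `K`-span of the monomials outside `𝔧` of degree `≤ t`. -/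
noncomputable def spanNLE {N : ℕ} (𝔧 : Set (Mon N)) (t : ℕ) :
    Submodule K (MvPolynomial (Fin N) K) :=
  Submodule.span K (mono K '' {u : Mon N | u ∉ 𝔧 ∧ mdeg u ≤ t})

/-- `(𝔊)_{≤t}`: the `K`-subspace of elements of `(𝔊)` of degree `≤ t`. -/
noncomputable def GleSub {N : ℕ} (𝔧 : Set (Mon N))
    (f : Mon N → MvPolynomial (Fin N) K) (t : ℕ) :
    Submodule K (MvPolynomial (Fin N) K) :=
  (idealG K 𝔧 f).restrictScalars K ⊓ degLE K N t

/-- A `[𝔧,m]`-marked basis: a `[𝔧,m]`-marked set with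
`R_{≤t} = ⟨N(𝔧)_{≤t}⟩ ⊕ (𝔊)_{≤t}` for all `t ≥ m`. -/
def JmMarkedBasis {N : ℕ} (𝔧 : Set (Mon N)) (m : ℕ)
    (f : Mon N → MvPolynomial (Fin N) K) : Prop :=
  JmMarkedSet K 𝔧 m f ∧
  ∀ t, m ≤ t →
    Disjoint (spanNLE K 𝔧 t) (GleSub K 𝔧 f t) ∧
    spanNLE K 𝔧 t ⊔ GleSub K 𝔧 f t = degLE K N t

variable {n : ℕ}

/-- Embedding of monomials of `R = K[x_1,…,x_n]` into
`S = K[x_0,x_1,…,x_n]` (index `0` is the extra smallest variable `x_0`). -/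
noncomputable def emb : Mon n → Mon (n + 1) := Finsupp.mapDomain Fin.succ

/-- Dehomogenization of monomials: set `x_0 = 1`, i.e. forget the exponent
of `x_0`. -/
noncomputable def dehomM (v : Mon (n + 1)) : Mon n :=
  Finsupp.comapDomain Fin.succ v (Fin.succ_injective n).injOn

/-- The monomial ideal generated by a set `B` of monomials. -/
def genBy {N : ℕ} (B : Set (Mon N)) : Set (Mon N) :=
  {v | ∃ b ∈ B, b ≤ v}

/-- The homogenization `f^h ∈ S` of a polynomial `f ∈ R`. -/
noncomputable def homogPoly (f : MvPolynomial (Fin n) K) :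
    MvPolynomial (Fin (n + 1)) K :=
  ∑ u ∈ f.support,
    MvPolynomial.monomial (emb u + Finsupp.single 0 (f.totalDegree - mdeg u))
      (MvPolynomial.coeff u f)

/-- The dehomogenization `F^a ∈ R` of a polynomial `F ∈ S` (set `x_0 = 1`). -/
noncomputable def dehomPoly : MvPolynomial (Fin (n + 1)) K →ₐ[K] MvPolynomial (Fin n) K :=
  MvPolynomial.aeval
    (Fin.cases (motive := fun _ => MvPolynomial (Fin n) K) 1 MvPolynomial.X)

/-- Common index set `B_𝔧 ∪ (𝔧_{≤m} \ B_𝔧)` for a marked set together with a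
completion. -/
def Dset {N : ℕ} (𝔧 : Set (Mon N)) (m : ℕ) : Set (Mon N) :=
  MinBasis 𝔧 ∪ {β | β ∈ 𝔧 ∧ mdeg β ≤ m ∧ β ∉ MinBasis 𝔧}

open Classical in
/-- The marked polynomial of `𝔊 ∪ 𝔊̄` with head term `x^α`. -/
noncomputable def combPoly {N : ℕ} (𝔧 : Set (Mon N))
    (f h : Mon N → MvPolynomial (Fin N) K) (α : Mon N) : MvPolynomial (Fin N) K :=
  if α ∈ MinBasis 𝔧 then f α else h α

/-- `m_α = max{0, m - deg f_α}`. -/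
noncomputable def mShift {N : ℕ} (𝔧 : Set (Mon N))
    (f h : Mon N → MvPolynomial (Fin N) K) (m : ℕ) (α : Mon N) : ℕ :=
  m - (combPoly K 𝔧 f h α).totalDegree

/-- The head term `x_0^{m_α + deg f_α - |α|} x^α` of the homogenized marked
polynomial. -/
noncomputable def homHead (𝔧 : Set (Mon n))
    (f h : Mon n → MvPolynomial (Fin n) K) (m : ℕ) (α : Mon n) : Mon (n + 1) :=
  emb α + Finsupp.single 0
    (mShift K 𝔧 f h m α + (combPoly K 𝔧 f h α).totalDegree - mdeg α)

/-- The homogenized marked polynomial `x_0^{m_α} f_α^h`. -/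
noncomputable def homG (𝔧 : Set (Mon n))
    (f h : Mon n → MvPolynomial (Fin n) K) (m : ℕ) (α : Mon n) :
    MvPolynomial (Fin (n + 1)) K :=
  MvPolynomial.X 0 ^ (mShift K 𝔧 f h m α) * homogPoly K (combPoly K 𝔧 f h α)

/-- The truncation `J_{≥ m}` of a monomial ideal. -/
def trunc {N : ℕ} (J : Set (Mon N)) (m : ℕ) : Set (Mon N) :=
  {u | u ∈ J ∧ m ≤ mdeg u}


/-! ### Auxiliary lemmas -/

section Aux

lemma mdeg_add {N : ℕ} (a b : Mon N) : mdeg (a + b) = mdeg a + mdeg b :=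
  Finsupp.sum_add_index' (fun _ => rfl) (fun _ _ _ => rfl)

lemma mdeg_single {N : ℕ} (i : Fin N) (c : ℕ) : mdeg (Finsupp.single i c) = c :=
  Finsupp.sum_single_index rfl

lemma mdeg_eq_degree {N : ℕ} (u : Mon N) : mdeg u = Finsupp.degree u := rfl

lemma mdeg_eq_zero {N : ℕ} {u : Mon N} (h : mdeg u = 0) : u = 0 := by
  rw [mdeg_eq_degree] at h; exact (Finsupp.degree_eq_zero_iff u).mp h

lemma mdeg_mono {N : ℕ} {a b : Mon N} (h : a ≤ b) : mdeg a ≤ mdeg b := by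
  have h1 : a + (b - a) = b := add_tsub_cancel_of_le h
  calc mdeg a ≤ mdeg a + mdeg (b - a) := Nat.le_add_right _ _
    _ = mdeg b := by rw [← mdeg_add, h1]

lemma eq_of_le_of_mdeg_eq {N : ℕ} {a b : Mon N} (h : a ≤ b) (hd : mdeg a = mdeg b) : a = b := by
  have h1 : a + (b - a) = b := add_tsub_cancel_of_le h
  have h2 : mdeg (b - a) = 0 := by
    have := mdeg_add a (b - a); rw [h1] at this; omega
  have h3 := mdeg_eq_zero h2
  rw [← h1, h3, add_zero]

lemma exists_lt_of_mdeg_lt {N : ℕ} {a b : Mon N} (h : a ≤ b) (hd : mdeg a < mdeg b) :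
    ∃ i, a i < b i := by
  by_contra hc
  push_neg at hc
  have hba : b ≤ a := fun i => hc i
  exact absurd (mdeg_mono hba) (by omega)

lemma pad_aux {N : ℕ} (m : ℕ) : ∀ k (w a : Mon N), mdeg w ≤ k → a ≤ w → mdeg a ≤ m →
    m ≤ mdeg w → ∃ v, a ≤ v ∧ v ≤ w ∧ mdeg v = m := by
  intro k
  induction k with
  | zero => intro w a hw haw ha hm; exact ⟨w, haw, le_refl w, by omega⟩
  | succ k ih =>
    intro w a hw haw ha hm
    rcases eq_or_lt_of_le hm with he | hlt
    · exact ⟨w, haw, le_refl w, he.symm⟩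
    · have halt : mdeg a < mdeg w := lt_of_le_of_lt ha hlt
      obtain ⟨i, hi⟩ := exists_lt_of_mdeg_lt haw halt
      have hsle : Finsupp.single i 1 ≤ w := by
        intro j
        rcases eq_or_ne j i with rfl | hne
        · simpa using Nat.one_le_iff_ne_zero.mpr (by omega)
        · simp [Finsupp.single_apply, Ne.symm hne]
      set w' := w - Finsupp.single i 1 with hw'
      have hww' : w' + Finsupp.single i 1 = w := tsub_add_cancel_of_le hsle
      have hdw' : mdeg w' + 1 = mdeg w := by
        have := mdeg_add w' (Finsupp.single i 1)
        rw [hww', mdeg_single] at this; omega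
      have haw' : a ≤ w' := by
        intro j
        have hwj : w' j = w j - Finsupp.single i 1 j := by rw [hw']; rfl
        rcases eq_or_ne j i with rfl | hne
        · rw [hwj]; simp; omega
        · rw [hwj]; simp [Finsupp.single_apply, Ne.symm hne]; exact haw j
      obtain ⟨v, h1, h2, h3⟩ := ih w' a (by omega) haw' ha (by omega)
      exact ⟨v, h1, le_trans h2 (by rw [← hww']; exact le_add_of_nonneg_right zero_le), h3⟩

lemma pad {N : ℕ} {m : ℕ} {w a : Mon N} (haw : a ≤ w) (ha : mdeg a ≤ m) (hm : m ≤ mdeg w) :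
    ∃ v, a ≤ v ∧ v ≤ w ∧ mdeg v = m :=
  pad_aux m (mdeg w) w a le_rfl haw ha hm

lemma emb_apply_succ (u : Mon n) (i : Fin n) : emb u i.succ = u i :=
  Finsupp.mapDomain_apply (Fin.succ_injective n) u i

lemma emb_apply_zero (u : Mon n) : emb u 0 = 0 :=
  Finsupp.mapDomain_notin_range u 0 (by simp [Set.mem_range])

lemma dehomM_apply (v : Mon (n + 1)) (i : Fin n) : dehomM v i = v i.succ := rfl

lemma mdeg_emb (u : Mon n) : mdeg (emb u) = mdeg u :=
  Finsupp.sum_mapDomain_index (fun _ => rfl) (fun _ _ _ => rfl)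

lemma single_zero_apply_succ (c : ℕ) (i : Fin n) :
    (Finsupp.single (0 : Fin (n+1)) c) i.succ = 0 := by
  simp [Finsupp.single_apply, (Fin.succ_ne_zero i).symm]

lemma head_apply_succ (u : Mon n) (c : ℕ) (i : Fin n) :
    (emb u + Finsupp.single 0 c : Mon (n+1)) i.succ = u i := by
  rw [Finsupp.add_apply, emb_apply_succ, single_zero_apply_succ, add_zero]

lemma head_apply_zero (u : Mon n) (c : ℕ) : (emb u + Finsupp.single 0 c : Mon (n+1)) 0 = c := by
  rw [Finsupp.add_apply, emb_apply_zero, zero_add, Finsupp.single_eq_same]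

lemma head_inj {u u' : Mon n} {c c' : ℕ}
    (h : emb u + Finsupp.single 0 c = emb u' + Finsupp.single 0 c') : u = u' ∧ c = c' := by
  constructor
  · ext i
    have h2 := congrArg (fun v : Mon (n+1) => v i.succ) h
    simpa only [head_apply_succ] using h2
  · have h2 := congrArg (fun v : Mon (n+1) => v 0) h
    simpa only [head_apply_zero] using h2

lemma mdeg_head (u : Mon n) (c : ℕ) : mdeg (emb u + Finsupp.single 0 c) = mdeg u + c := by
  rw [mdeg_add, mdeg_emb, mdeg_single]

lemma decompM (v : Mon (n + 1)) : emb (dehomM v) + Finsupp.single 0 (v 0) = v := by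
  ext j
  induction j using Fin.cases with
  | zero => rw [head_apply_zero]
  | succ i => rw [head_apply_succ, dehomM_apply]

lemma emb_le_iff {a : Mon n} {v : Mon (n + 1)} : emb a ≤ v ↔ ∀ i, a i ≤ v i.succ := by
  constructor
  · intro h i; have := h i.succ; rwa [emb_apply_succ] at this
  · intro h j
    induction j using Fin.cases with
    | zero => rw [emb_apply_zero]; exact Nat.zero_le _
    | succ i => rw [emb_apply_succ]; exact h i

lemma emb_mono {a b : Mon n} (h : a ≤ b) : emb a ≤ emb b :=
  emb_le_iff.mpr fun i => by rw [emb_apply_succ]; exact h i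

lemma mem_of_le_monIdeal {N : ℕ} {J : Set (Mon N)} (hJ : MonIdeal J) {b u : Mon N}
    (hb : b ∈ J) (h : b ≤ u) : u ∈ J := by
  have h1 : b + (u - b) = u := add_tsub_cancel_of_le h
  rw [← h1]; exact hJ b hb _

lemma exists_minBasis_le {N : ℕ} {J : Set (Mon N)} {u : Mon N} (hu : u ∈ J) :
    ∃ b ∈ MinBasis J, b ≤ u := by
  set S : Set ℕ := {k | ∃ v ∈ J, v ≤ u ∧ mdeg v = k} with hS
  have hne : (sInf S) ∈ S := Nat.sInf_mem ⟨mdeg u, u, hu, le_rfl, rfl⟩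
  obtain ⟨v, hvJ, hvu, hvd⟩ := hne
  refine ⟨v, ⟨hvJ, ?_⟩, hvu⟩
  intro w hwJ hwv
  have hwS : mdeg w ∈ S := ⟨w, hwJ, le_trans hwv hvu, rfl⟩
  have hle : sInf S ≤ mdeg w := Nat.sInf_le hwS
  exact eq_of_le_of_mdeg_eq hwv (by have := mdeg_mono hwv; omega)

lemma mem_genBy_emb {B : Set (Mon n)} {v : Mon (n + 1)} :
    v ∈ genBy (emb '' B) ↔ ∃ b ∈ B, emb b ≤ v := by
  constructor
  · rintro ⟨_, ⟨b, hb, rfl⟩, hle⟩; exact ⟨b, hb, hle⟩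
  · rintro ⟨b, hb, hle⟩; exact ⟨emb b, ⟨b, hb, rfl⟩, hle⟩

lemma single_add_shift (a : Mon (n+1)) (s t : ℕ) :
    Finsupp.single (0 : Fin (n+1)) s + (a + Finsupp.single 0 t)
      = a + Finsupp.single 0 (s + t) := by
  rw [Finsupp.single_add]; abel

section Marked

variable (𝔧 : Set (Mon n)) (m : ℕ) (f h : Mon n → MvPolynomial (Fin n) K)

lemma dset_mem_j {α : Mon n} (hα : α ∈ Dset 𝔧 m) : α ∈ 𝔧 := by
  rcases hα with hb | ⟨hj, _, _⟩
  · exact hb.1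
  · exact hj

lemma comb_spec (hms : JmMarkedSet K 𝔧 m f) (hcomp : IsCompletion K 𝔧 m f h)
    {α : Mon n} (hα : α ∈ Dset 𝔧 m) :
    MvPolynomial.coeff α (combPoly K 𝔧 f h α) = 1 ∧
    ∀ u ∈ (combPoly K 𝔧 f h α).support, u ≠ α → u ∉ 𝔧 ∧ mdeg u ≤ max m (mdeg α) := by
  by_cases hb : α ∈ MinBasis 𝔧
  · rw [combPoly, if_pos hb]
    obtain ⟨h1, h2⟩ := hms α hb
    exact ⟨h1, fun u hu hne => h2 u hu hne⟩
  · rcases hα with h' | ⟨hj, hle, hnb⟩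
    · exact absurd h' hb
    rw [combPoly, if_neg hb]
    obtain ⟨_, h1, h2⟩ := hcomp α hj hle hnb
    exact ⟨h1, fun u hu hne =>
      ⟨(h2 u hu hne).1, le_trans (h2 u hu hne).2 (le_max_left _ _)⟩⟩

lemma comb_mem_supp (hms : JmMarkedSet K 𝔧 m f) (hcomp : IsCompletion K 𝔧 m f h)
    {α : Mon n} (hα : α ∈ Dset 𝔧 m) : α ∈ (combPoly K 𝔧 f h α).support :=
  MvPolynomial.mem_support_iff.mpr
    (by rw [(comb_spec K 𝔧 m f h hms hcomp hα).1]; exact one_ne_zero)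

lemma comb_deg_bounds (hms : JmMarkedSet K 𝔧 m f) (hcomp : IsCompletion K 𝔧 m f h)
    {α : Mon n} (hα : α ∈ Dset 𝔧 m) :
    mdeg α ≤ (combPoly K 𝔧 f h α).totalDegree ∧
    (combPoly K 𝔧 f h α).totalDegree ≤ max m (mdeg α) := by
  constructor
  · exact MvPolynomial.le_totalDegree (comb_mem_supp K 𝔧 m f h hms hcomp hα)
  · rw [MvPolynomial.totalDegree]
    apply Finset.sup_le
    intro u hu
    rcases eq_or_ne u α with rfl | hne
    · exact le_max_right _ _
    · exact ((comb_spec K 𝔧 m f h hms hcomp hα).2 u hu hne).2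

lemma key4 (hms : JmMarkedSet K 𝔧 m f) (hcomp : IsCompletion K 𝔧 m f h)
    {α : Mon n} (hα : α ∈ Dset 𝔧 m) :
    mShift K 𝔧 f h m α + (combPoly K 𝔧 f h α).totalDegree = max m (mdeg α) := by
  obtain ⟨h1, h2⟩ := comb_deg_bounds K 𝔧 m f h hms hcomp hα
  rw [mShift]
  omega

lemma homHead_eq (hms : JmMarkedSet K 𝔧 m f) (hcomp : IsCompletion K 𝔧 m f h)
    {α : Mon n} (hα : α ∈ Dset 𝔧 m) :
    homHead K 𝔧 f h m α = emb α + Finsupp.single 0 (max m (mdeg α) - mdeg α) := by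
  rw [homHead, key4 K 𝔧 m f h hms hcomp hα]

lemma mdeg_homHead (hms : JmMarkedSet K 𝔧 m f) (hcomp : IsCompletion K 𝔧 m f h)
    {α : Mon n} (hα : α ∈ Dset 𝔧 m) :
    mdeg (homHead K 𝔧 f h m α) = max m (mdeg α) := by
  rw [homHead_eq K 𝔧 m f h hms hcomp hα, mdeg_head]
  have := le_max_right m (mdeg α)
  omega

lemma homG_eq :
    homG K 𝔧 f h m α = ∑ u ∈ (combPoly K 𝔧 f h α).support,
      MvPolynomial.monomial
        (emb u + Finsupp.single 0
          (mShift K 𝔧 f h m α + ((combPoly K 𝔧 f h α).totalDegree - mdeg u)))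
        (MvPolynomial.coeff u (combPoly K 𝔧 f h α)) := by
  rw [homG, homogPoly, Finset.mul_sum]
  refine Finset.sum_congr rfl fun u hu => ?_
  rw [MvPolynomial.X_pow_eq_monomial, MvPolynomial.monomial_mul, one_mul, single_add_shift]

lemma coeff_homG (u : Mon n) :
    MvPolynomial.coeff
      (emb u + Finsupp.single 0
        (mShift K 𝔧 f h m α + ((combPoly K 𝔧 f h α).totalDegree - mdeg u)))
      (homG K 𝔧 f h m α) = MvPolynomial.coeff u (combPoly K 𝔧 f h α) := by
  classical
  rw [homG_eq, MvPolynomial.coeff_sum]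
  by_cases hu : u ∈ (combPoly K 𝔧 f h α).support
  · rw [Finset.sum_eq_single u]
    · rw [MvPolynomial.coeff_monomial, if_pos rfl]
    · intro b hb hbne
      rw [MvPolynomial.coeff_monomial, if_neg]
      intro he
      exact hbne (head_inj he).1
    · intro hno; exact absurd hu hno
  · rw [MvPolynomial.notMem_support_iff.mp hu]
    apply Finset.sum_eq_zero
    intro b hb
    rw [MvPolynomial.coeff_monomial, if_neg]
    intro he
    exact hu ((head_inj he).1 ▸ hb)

lemma support_homG {v : Mon (n+1)} (hv : v ∈ (homG K 𝔧 f h m α).support) :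
    ∃ u ∈ (combPoly K 𝔧 f h α).support,
      v = emb u + Finsupp.single 0
        (mShift K 𝔧 f h m α + ((combPoly K 𝔧 f h α).totalDegree - mdeg u)) := by
  classical
  rw [homG_eq] at hv
  obtain ⟨u, hu, hv2⟩ := Finset.mem_biUnion.mp (MvPolynomial.support_sum hv)
  refine ⟨u, hu, ?_⟩
  have := MvPolynomial.support_monomial_subset hv2
  simpa using this

lemma homHead_eq_shift (hms : JmMarkedSet K 𝔧 m f) (hcomp : IsCompletion K 𝔧 m f h)
    {α : Mon n} (hα : α ∈ Dset 𝔧 m) :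
    homHead K 𝔧 f h m α = emb α + Finsupp.single 0
      (mShift K 𝔧 f h m α + ((combPoly K 𝔧 f h α).totalDegree - mdeg α)) := by
  rw [homHead]
  congr 2
  have := (comb_deg_bounds K 𝔧 m f h hms hcomp hα).1
  omega

end Marked

end Aux

/-- the homogenization `G = {x_0^{m_α} f_α^h : f_α ∈ 𝔊 ∪ 𝔊̄}` of
a `[𝔧,m]`-marked set `𝔊` with completion `𝔊̄` is a `(𝔧^h)_{≥m}`-marked set in
`S`, with head terms `x_0^{m_α + deg f_α - |α|} x^α`. -/
theorem homogenized_markedSet {n : ℕ} (K : Type) [Field K]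
    (𝔧 : Set (Mon n)) (m : ℕ) (f h : Mon n → MvPolynomial (Fin n) K)
    (hss : StronglyStable 𝔧) (hm : 0 < m)
    (hms : JmMarkedSet K 𝔧 m f) (hcomp : IsCompletion K 𝔧 m f h) :
    Set.InjOn (homHead K 𝔧 f h m) (Dset 𝔧 m) ∧
    homHead K 𝔧 f h m '' Dset 𝔧 m = MinBasis (trunc (genBy (emb '' MinBasis 𝔧)) m) ∧
    ∀ α ∈ Dset 𝔧 m,
      MvPolynomial.coeff (homHead K 𝔧 f h m α) (homG K 𝔧 f h m α) = 1 ∧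
      (homG K 𝔧 f h m α).IsHomogeneous (mdeg (homHead K 𝔧 f h m α)) ∧
      ∀ v ∈ (homG K 𝔧 f h m α).support, v ≠ homHead K 𝔧 f h m α →
        v ∉ trunc (genBy (emb '' MinBasis 𝔧)) m := by
  have hmi : MonIdeal 𝔧 := hss.1
  have hhead : ∀ α ∈ Dset 𝔧 m, homHead K 𝔧 f h m α
      = emb α + Finsupp.single 0 (max m (mdeg α) - mdeg α) :=
    fun α hα => homHead_eq K 𝔧 m f h hms hcomp hα
  have hJh : ∀ {v : Mon (n+1)}, v ∈ genBy (emb '' MinBasis 𝔧) ↔ ∃ b ∈ MinBasis 𝔧, emb b ≤ v :=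
    fun {v} => mem_genBy_emb
  have hmemtrunc : ∀ α ∈ Dset 𝔧 m,
      homHead K 𝔧 f h m α ∈ trunc (genBy (emb '' MinBasis 𝔧)) m := by
    intro α hα
    obtain ⟨b, hb, hba⟩ := exists_minBasis_le (dset_mem_j 𝔧 m hα)
    constructor
    · rw [hhead α hα]
      exact hJh.mpr ⟨b, hb, le_trans (emb_mono hba) (le_add_of_nonneg_right zero_le)⟩
    · rw [mdeg_homHead K 𝔧 m f h hms hcomp hα]; exact le_max_left _ _
  refine ⟨?_, ?_, ?_⟩
  · intro α hα α' hα' he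
    rw [hhead α hα, hhead α' hα'] at he
    exact (head_inj he).1
  · apply Set.eq_of_subset_of_subset
    · rintro w ⟨α, hα, rfl⟩
      refine ⟨hmemtrunc α hα, ?_⟩
      intro v hv hle
      obtain ⟨b, hb, hbv⟩ := hJh.mp hv.1
      rw [hhead α hα] at hle ⊢
      by_cases hma : mdeg α ≤ m
      · have hdw : mdeg (emb α + Finsupp.single 0 (max m (mdeg α) - mdeg α)) = m := by
          rw [mdeg_head]; omega
        exact eq_of_le_of_mdeg_eq hle
          (by have h1 := mdeg_mono hle; have h2 := hv.2; omega)
      · push_neg at hma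
        have hαb : α ∈ MinBasis 𝔧 := by
          rcases hα with h' | ⟨_, hle2, _⟩
          · exact h'
          · omega
        have hw : (Finsupp.single (0 : Fin (n+1)) (max m (mdeg α) - mdeg α)) = 0 := by
          have hz : max m (mdeg α) - mdeg α = 0 := by omega
          rw [hz, Finsupp.single_zero]
        rw [hw, add_zero] at hle ⊢
        have hbα : b ≤ α := by
          intro i
          have h2 := (le_trans hbv hle) i.succ
          rwa [emb_apply_succ, emb_apply_succ] at h2
        have hbe : b = α := hαb.2 b hb.1 hbα
        subst hbe
        exact le_antisymm hle hbv
    · rintro w ⟨⟨hwJ, hwd⟩, hmin⟩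
      obtain ⟨b, hb, hbw⟩ := hJh.mp hwJ
      by_cases hc : m ≤ mdeg (emb b)
      · have hbt : emb b ∈ trunc (genBy (emb '' MinBasis 𝔧)) m :=
          ⟨hJh.mpr ⟨b, hb, le_rfl⟩, hc⟩
        have hwb : emb b = w := hmin (emb b) hbt hbw
        refine ⟨b, Or.inl hb, ?_⟩
        rw [hhead b (Or.inl hb), ← hwb]
        rw [mdeg_emb] at hc
        have hz : max m (mdeg b) - mdeg b = 0 := by omega
        rw [hz, Finsupp.single_zero, add_zero]
      · push_neg at hc
        obtain ⟨v, hv1, hv2, hv3⟩ := pad hbw (le_of_lt hc) hwd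
        have hvt : v ∈ trunc (genBy (emb '' MinBasis 𝔧)) m :=
          ⟨hJh.mpr ⟨b, hb, hv1⟩, le_of_eq hv3.symm⟩
        have hvw : v = w := hmin v hvt hv2
        have hwm : mdeg w = m := by rw [← hvw, hv3]
        set α := dehomM w with hαdef
        have hdecomp := decompM w
        have hbα : b ≤ α := by
          intro i
          have h2 := hbw i.succ
          rwa [emb_apply_succ, ← dehomM_apply] at h2
        have hαj : α ∈ 𝔧 := mem_of_le_monIdeal hmi hb.1 hbα
        have hmw : mdeg α + w 0 = m := by
          have h3 := mdeg_head α (w 0)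
          rw [hdecomp] at h3; omega
        have hαD : α ∈ Dset 𝔧 m := by
          by_cases hαb : α ∈ MinBasis 𝔧
          · exact Or.inl hαb
          · exact Or.inr ⟨hαj, by omega, hαb⟩
        refine ⟨α, hαD, ?_⟩
        rw [hhead α hαD]
        have hz : max m (mdeg α) - mdeg α = w 0 := by omega
        rw [hz, hdecomp]
  · intro α hα
    have hsp := comb_spec K 𝔧 m f h hms hcomp hα
    refine ⟨?_, ?_, ?_⟩
    · rw [homHead_eq_shift K 𝔧 m f h hms hcomp hα, coeff_homG]
      exact hsp.1
    · intro d hd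
      have hds : d ∈ (homG K 𝔧 f h m α).support := MvPolynomial.mem_support_iff.mpr hd
      obtain ⟨u, hu, rfl⟩ := support_homG K 𝔧 m f h hds
      rw [Pi.one_def, ← Finsupp.degree_eq_weight_one, ← mdeg_eq_degree, mdeg_head,
        mdeg_homHead K 𝔧 m f h hms hcomp hα, ← key4 K 𝔧 m f h hms hcomp hα]
      have hud : mdeg u ≤ (combPoly K 𝔧 f h α).totalDegree := MvPolynomial.le_totalDegree hu
      omega
    · intro v hv hne hvt
      obtain ⟨u, hu, rfl⟩ := support_homG K 𝔧 m f h hv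
      have hune : u ≠ α := by
        intro he; subst he
        exact hne (homHead_eq_shift K 𝔧 m f h hms hcomp hα).symm
      obtain ⟨b, hb, hbv⟩ := hJh.mp hvt.1
      have hbu : b ≤ u := by
        intro i
        have h2 := hbv i.succ
        rwa [emb_apply_succ, head_apply_succ] at h2
      exact (hsp.2 u hu hune).1 (mem_of_le_monIdeal hmi hb.1 hbu)


end Paper
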